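/- Let E be a field of characteristic zero and K/E a finite Galois extension with Galois group G of order d. Each σ ∈ G extends uniquely to a field automorphism of K(X) fixing X (hence fixing E(X) pointwise), and these extensions commute with the derivative D = d/dX. Suppose a ∈ E(X), viewed inside K(X), can be written as a = D(g_0) + Σ_{ℓ=1}^{L} γ_ℓ · D(g_ℓ)/g_ℓ with g_0 ∈ K(X), nonzero g_1, …, g_L ∈ K(X), and γ_1, …, γ_L ∈ E. Then, setting g̃_0 = (1/d) Σ_{σ ∈ G} σ(g_0) and g̃_ℓ = ∏_{σ ∈ G} σ(g_ℓ), one has g̃_0, g̃_1, …, g̃_L ∈ E(X) with g̃_1, …, g̃_L nonzero, and a = D(g̃_0) + Σ_{ℓ=1}^{L} (γ_ℓ/d) · D(g̃_ℓ)/g̃_ℓ. (Galois descent for logarithmic-derivative decompositions.) -/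

import Mathlib

/-- `h ∈ E(X)`: the rational function `h ∈ K(X)` lies in the subfield `E(X)`,
i.e. it is a quotient of two polynomials with coefficients in `E`. -/
def RatFunc.memBaseField (E K : Type*) [Field E] [Field K] [Algebra E K]
    (h : RatFunc K) : Prop :=
  ∃ p q : Polynomial E, q ≠ 0 ∧
    h = algebraMap (Polynomial K) (RatFunc K) (p.map (algebraMap E K)) /
        algebraMap (Polynomial K) (RatFunc K) (q.map (algebraMap E K))

open Polynomial

section Helpers

variable {K : Type*} [Field K]

lemma hom_algebraMap_poly (f : RatFunc K →+* RatFunc K) (s : K →+* K)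
    (hC : ∀ x, f (RatFunc.C x) = RatFunc.C (s x)) (hX : f RatFunc.X = RatFunc.X)
    (p : K[X]) :
    f (algebraMap K[X] (RatFunc K) p) = algebraMap K[X] (RatFunc K) (p.map s) := by
  induction p using Polynomial.induction_on' with
  | add p q hp hq => simp [hp, hq]
  | monomial n a =>
      rw [← Polynomial.C_mul_X_pow_eq_monomial]
      simp [map_mul, map_pow, RatFunc.algebraMap_C, RatFunc.algebraMap_X, hC, hX]

lemma hom_apply_eq (f : RatFunc K →+* RatFunc K) (s : K →+* K)
    (hC : ∀ x, f (RatFunc.C x) = RatFunc.C (s x)) (hX : f RatFunc.X = RatFunc.X)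
    (h : RatFunc K) :
    f h = algebraMap K[X] (RatFunc K) (h.num.map s) /
          algebraMap K[X] (RatFunc K) (h.denom.map s) := by
  conv_lhs => rw [← RatFunc.num_div_denom h]
  rw [map_div₀, hom_algebraMap_poly f s hC hX, hom_algebraMap_poly f s hC hX]

lemma hom_comm_D (f : RatFunc K →+* RatFunc K) (s : K →+* K)
    (hC : ∀ x, f (RatFunc.C x) = RatFunc.C (s x)) (hX : f RatFunc.X = RatFunc.X)
    (D : Derivation K (RatFunc K) (RatFunc K))
    (hD : ∀ p : K[X],
      D (algebraMap K[X] (RatFunc K) p) = algebraMap K[X] (RatFunc K) (derivative p))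
    (h : RatFunc K) : f (D h) = D (f h) := by
  conv_rhs => rw [hom_apply_eq f s hC hX, Derivation.leibniz_div]
  conv_lhs => rw [← RatFunc.num_div_denom h, Derivation.leibniz_div]
  simp only [smul_eq_mul, hD, map_mul, map_sub, map_inv₀, map_pow,
    hom_algebraMap_poly f s hC hX, Polynomial.derivative_map]

lemma deriv_prod_div {ι : Type*} (D : Derivation K (RatFunc K) (RatFunc K)) (s : Finset ι)
    (h : ι → RatFunc K) (hh : ∀ i ∈ s, h i ≠ 0) :
    D (∏ i ∈ s, h i) / (∏ i ∈ s, h i) = ∑ i ∈ s, D (h i) / h i := by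
  induction s using Finset.cons_induction with
  | empty => simp
  | cons a s ha ih =>
      have h1 : h a ≠ 0 := hh a (Finset.mem_cons_self a s)
      have h2 : (∏ i ∈ s, h i) ≠ 0 :=
        Finset.prod_ne_zero_iff.mpr fun i hi => hh i (Finset.mem_cons_of_mem hi)
      rw [Finset.prod_cons, Finset.sum_cons, Derivation.leibniz,
        ← ih (fun i hi => hh i (Finset.mem_cons_of_mem hi))]
      field_simp
      ring

variable {E : Type*} [Field E] [Algebra E K] [FiniteDimensional E K] [IsGalois E K]

lemma coeffs_fixed_lift (P : K[X])
    (hP : ∀ τ : K ≃ₐ[E] K, P.map (τ : K ≃+* K).toRingHom = P) :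
    ∃ p : E[X], p.map (algebraMap E K) = P := by
  rw [← Polynomial.mem_lifts]
  rw [Polynomial.lifts_iff_coeff_lifts]
  intro n
  have hbot := (IsGalois.tfae.out 0 1).mp (inferInstance : IsGalois E K)
  have hmem : P.coeff n ∈ IntermediateField.fixedField (⊤ : Subgroup (K ≃ₐ[E] K)) := by
    intro g
    have := congrArg (fun Q => Polynomial.coeff Q n) (hP g.1)
    simpa [Polynomial.coeff_map, Subgroup.smul_def, AlgEquiv.smul_def] using this
  rw [hbot, IntermediateField.mem_bot] at hmem
  exact hmem

lemma fixed_memBaseField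
    (act : (K ≃ₐ[E] K) → (RatFunc K ≃+* RatFunc K))
    (hactC : ∀ σ x, act σ (RatFunc.C x) = RatFunc.C (σ x))
    (hactX : ∀ σ, act σ RatFunc.X = RatFunc.X)
    (h : RatFunc K) (hfix : ∀ σ, act σ h = h) :
    RatFunc.memBaseField E K h := by
  classical
  have hpoly : ∀ (σ : K ≃ₐ[E] K) (p : K[X]),
      act σ (algebraMap K[X] (RatFunc K) p)
        = algebraMap K[X] (RatFunc K) (p.map (σ : K ≃+* K).toRingHom) := fun σ p =>
    hom_algebraMap_poly ((act σ) : RatFunc K →+* RatFunc K) (σ : K ≃+* K).toRingHom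
      (fun x => hactC σ x) (hactX σ) p
  set Q0 := h.denom with hQ0def
  have hQ0ne : Q0 ≠ 0 := h.denom_ne_zero
  set Q : K[X] := ∏ σ : K ≃ₐ[E] K, Q0.map (σ : K ≃+* K).toRingHom with hQdef
  have hmapne : ∀ σ : K ≃ₐ[E] K, Q0.map (σ : K ≃+* K).toRingHom ≠ 0 := fun σ =>
    Polynomial.map_ne_zero hQ0ne
  have hQne : Q ≠ 0 := Finset.prod_ne_zero_iff.mpr fun σ _ => hmapne σ
  have hcompRH : ∀ τ σ : K ≃ₐ[E] K,
      ((τ : K ≃+* K).toRingHom).comp ((σ : K ≃+* K).toRingHom)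
        = ((τ * σ : K ≃ₐ[E] K) : K ≃+* K).toRingHom := by
    intro τ σ; ext x; rfl
  have hQfix : ∀ τ : K ≃ₐ[E] K, Q.map (τ : K ≃+* K).toRingHom = Q := by
    intro τ
    rw [hQdef, Polynomial.map_prod]
    refine Fintype.prod_equiv (Equiv.mulLeft τ) _ _ fun σ => ?_
    rw [Polynomial.map_map, hcompRH]
    rfl
  have hone : Q0.map ((1 : K ≃ₐ[E] K) : K ≃+* K).toRingHom = Q0 := by
    have : (((1 : K ≃ₐ[E] K) : K ≃+* K).toRingHom) = RingHom.id K := by ext x; rfl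
    rw [this, Polynomial.map_id]
  set R : K[X] := ∏ σ ∈ Finset.univ.erase (1 : K ≃ₐ[E] K), Q0.map (σ : K ≃+* K).toRingHom
    with hRdef
  have hQsplit : Q = Q0 * R := by
    rw [hQdef, hRdef, ← Finset.mul_prod_erase Finset.univ _ (Finset.mem_univ 1), hone]
  have hRne : R ≠ 0 := Finset.prod_ne_zero_iff.mpr fun σ _ => hmapne σ
  set P : K[X] := h.num * R with hPdef
  have hPQ : h = algebraMap K[X] (RatFunc K) P / algebraMap K[X] (RatFunc K) Q := by
    rw [hPdef, hQsplit, map_mul, map_mul,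
      mul_div_mul_right _ _ (RatFunc.algebraMap_ne_zero hRne), RatFunc.num_div_denom]
  have hPimg : algebraMap K[X] (RatFunc K) P = h * algebraMap K[X] (RatFunc K) Q := by
    rw [hPQ]
    field_simp [RatFunc.algebraMap_ne_zero hQne]
  have hPfix : ∀ τ : K ≃ₐ[E] K, P.map (τ : K ≃+* K).toRingHom = P := by
    intro τ
    apply RatFunc.algebraMap_injective K
    rw [← hpoly τ, hPimg, map_mul, hfix τ, hpoly τ, hQfix τ]
  obtain ⟨p, hp⟩ := coeffs_fixed_lift P hPfix
  obtain ⟨q, hq⟩ := coeffs_fixed_lift Q hQfix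
  refine ⟨p, q, ?_, ?_⟩
  · rintro rfl
    rw [Polynomial.map_zero] at hq
    exact hQne hq.symm
  · rw [hp, hq]; exact hPQ

end Helpers

/-- **Galois descent for logarithmic-derivative decompositions.**
`E` is a field of characteristic zero, `K/E` a finite Galois extension with Galois group
`G = (K ≃ₐ[E] K)` of order `d`.  Each `σ ∈ G` extends uniquely to an automorphism
`act σ` of `K(X)` fixing `X` (hence `E(X)` pointwise), commuting with `D = d/dX`.
If `a ∈ E(X)` can be written as `a = D(g₀) + Σ_ℓ γ_ℓ · D(g_ℓ)/g_ℓ` with `g₀ ∈ K(X)`,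
nonzero `g_ℓ ∈ K(X)` and `γ_ℓ ∈ E`, then with `g̃₀ = (1/d) Σ_σ σ(g₀)` and
`g̃_ℓ = ∏_σ σ(g_ℓ)` one has `g̃₀, g̃_ℓ ∈ E(X)`, the `g̃_ℓ` are nonzero, and
`a = D(g̃₀) + Σ_ℓ (γ_ℓ/d) · D(g̃_ℓ)/g̃_ℓ`. -/
theorem galois_descent_logarithmic_derivative
    (E K : Type*) [Field E] [CharZero E] [Field K] [Algebra E K]
    [FiniteDimensional E K] [IsGalois E K]
    (act : (K ≃ₐ[E] K) → (RatFunc K ≃+* RatFunc K))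
    (hactC : ∀ σ x, act σ (RatFunc.C x) = RatFunc.C (σ x))
    (hactX : ∀ σ, act σ RatFunc.X = RatFunc.X)
    (D : Derivation K (RatFunc K) (RatFunc K))
    (hD : ∀ p : Polynomial K,
      D (algebraMap (Polynomial K) (RatFunc K) p)
        = algebraMap (Polynomial K) (RatFunc K) (Polynomial.derivative p))
    (a : RatFunc K) (haE : RatFunc.memBaseField E K a)
    (L : ℕ) (g₀ : RatFunc K) (g : Fin L → RatFunc K) (hg : ∀ ℓ, g ℓ ≠ 0)
    (γ : Fin L → E)
    (ha : a = D g₀ + ∑ ℓ, RatFunc.C (algebraMap E K (γ ℓ)) * (D (g ℓ) / g ℓ)) :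
    RatFunc.memBaseField E K
        ((Fintype.card (K ≃ₐ[E] K) : RatFunc K)⁻¹ * ∑ σ, act σ g₀) ∧
      (∀ ℓ, RatFunc.memBaseField E K (∏ σ, act σ (g ℓ)) ∧ (∏ σ, act σ (g ℓ)) ≠ 0) ∧
      a = D ((Fintype.card (K ≃ₐ[E] K) : RatFunc K)⁻¹ * ∑ σ, act σ g₀)
          + ∑ ℓ, RatFunc.C (algebraMap E K (γ ℓ) / (Fintype.card (K ≃ₐ[E] K) : K))
              * (D (∏ σ, act σ (g ℓ)) / ∏ σ, act σ (g ℓ)) := by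
  classical
  haveI : CharZero K := charZero_of_injective_algebraMap (algebraMap E K).injective
  haveI : CharZero (RatFunc K) :=
    charZero_of_injective_algebraMap (algebraMap K (RatFunc K)).injective
  set d := Fintype.card (K ≃ₐ[E] K) with hddef
  have hdR : (d : RatFunc K) ≠ 0 := Nat.cast_ne_zero.mpr Fintype.card_ne_zero
  have hpoly : ∀ (σ : K ≃ₐ[E] K) (p : K[X]),
      act σ (algebraMap K[X] (RatFunc K) p)
        = algebraMap K[X] (RatFunc K) (p.map (σ : K ≃+* K).toRingHom) := fun σ p =>
    hom_algebraMap_poly ((act σ) : RatFunc K →+* RatFunc K) (σ : K ≃+* K).toRingHom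
      (fun x => hactC σ x) (hactX σ) p
  have hcommD : ∀ (σ : K ≃ₐ[E] K) (h : RatFunc K), act σ (D h) = D (act σ h) := fun σ h =>
    hom_comm_D ((act σ) : RatFunc K →+* RatFunc K) (σ : K ≃+* K).toRingHom
      (fun x => hactC σ x) (hactX σ) D hD h
  have hcompRH : ∀ τ σ : K ≃ₐ[E] K,
      ((τ : K ≃+* K).toRingHom).comp ((σ : K ≃+* K).toRingHom)
        = ((τ * σ : K ≃ₐ[E] K) : K ≃+* K).toRingHom := by
    intro τ σ; ext x; rfl
  have hcomp : ∀ (τ σ : K ≃ₐ[E] K) (h : RatFunc K), act τ (act σ h) = act (τ * σ) h := by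
    intro τ σ h
    have hs : act σ h
        = algebraMap K[X] (RatFunc K) (h.num.map (σ : K ≃+* K).toRingHom) /
          algebraMap K[X] (RatFunc K) (h.denom.map (σ : K ≃+* K).toRingHom) :=
      hom_apply_eq ((act σ) : RatFunc K →+* RatFunc K) (σ : K ≃+* K).toRingHom
        (fun x => hactC σ x) (hactX σ) h
    have hts : act (τ * σ) h
        = algebraMap K[X] (RatFunc K) (h.num.map ((τ * σ : K ≃ₐ[E] K) : K ≃+* K).toRingHom) /
          algebraMap K[X] (RatFunc K) (h.denom.map ((τ * σ : K ≃ₐ[E] K) : K ≃+* K).toRingHom) :=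
      hom_apply_eq ((act (τ * σ)) : RatFunc K →+* RatFunc K)
        ((τ * σ : K ≃ₐ[E] K) : K ≃+* K).toRingHom
        (fun x => hactC (τ * σ) x) (hactX (τ * σ)) h
    rw [hs, map_div₀, hpoly τ, hpoly τ, Polynomial.map_map, Polynomial.map_map, hcompRH, hts]
  have hσalg : ∀ σ : K ≃ₐ[E] K,
      ((σ : K ≃+* K).toRingHom).comp (algebraMap E K) = algebraMap E K := by
    intro σ; ext x; exact σ.commutes x
  have hfixbase : ∀ h : RatFunc K, RatFunc.memBaseField E K h → ∀ σ, act σ h = h := by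
    rintro h ⟨p, q, hq, rfl⟩ σ
    rw [map_div₀, hpoly, hpoly, Polynomial.map_map, Polynomial.map_map, hσalg]
  have hprodne : ∀ ℓ, (∏ σ, act σ (g ℓ)) ≠ 0 := by
    intro ℓ
    refine Finset.prod_ne_zero_iff.mpr fun σ _ => fun h0 => hg ℓ ?_
    have := congrArg (act σ).symm h0
    simpa using this
  have haσ : ∀ σ : K ≃ₐ[E] K, a = D (act σ g₀)
      + ∑ ℓ, RatFunc.C (algebraMap E K (γ ℓ)) * (D (act σ (g ℓ)) / act σ (g ℓ)) := by
    intro σ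
    conv_lhs => rw [← hfixbase a haE σ, ha]
    rw [map_add, map_sum, hcommD]
    congr 1
    refine Finset.sum_congr rfl fun ℓ _ => ?_
    rw [map_mul, map_div₀, hcommD, hactC, σ.commutes]
  have hsum : (d : RatFunc K) * a = D (∑ σ, act σ g₀)
      + ∑ ℓ, RatFunc.C (algebraMap E K (γ ℓ)) *
          (D (∏ σ, act σ (g ℓ)) / ∏ σ, act σ (g ℓ)) := by
    have h1 : ∑ _σ : K ≃ₐ[E] K, a = (d : RatFunc K) * a := by
      rw [Finset.sum_const, Finset.card_univ, nsmul_eq_mul, hddef]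
    rw [← h1]
    calc ∑ σ : K ≃ₐ[E] K, a
        = ∑ σ : K ≃ₐ[E] K, (D (act σ g₀)
            + ∑ ℓ, RatFunc.C (algebraMap E K (γ ℓ)) * (D (act σ (g ℓ)) / act σ (g ℓ))) :=
          Finset.sum_congr rfl fun σ _ => haσ σ
      _ = D (∑ σ, act σ g₀) + ∑ ℓ, RatFunc.C (algebraMap E K (γ ℓ)) *
            ∑ σ : K ≃ₐ[E] K, (D (act σ (g ℓ)) / act σ (g ℓ)) := by
          rw [Finset.sum_add_distrib, ← map_sum, Finset.sum_comm]
          simp_rw [← Finset.mul_sum]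
      _ = _ := by
          congr 1
          refine Finset.sum_congr rfl fun ℓ _ => ?_
          rw [← deriv_prod_div D Finset.univ _ (fun σ _ => by
            intro h0
            exact hg ℓ (by simpa using congrArg (act σ).symm h0))]
  refine ⟨?_, fun ℓ => ⟨?_, hprodne ℓ⟩, ?_⟩
  · refine fixed_memBaseField act hactC hactX _ fun τ => ?_
    rw [map_mul, map_inv₀, map_natCast, map_sum]
    congr 1
    exact Fintype.sum_equiv (Equiv.mulLeft τ) _ _ fun σ => hcomp τ σ g₀
  · refine fixed_memBaseField act hactC hactX _ fun τ => ?_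
    rw [map_prod]
    exact Fintype.prod_equiv (Equiv.mulLeft τ) _ _ fun σ => hcomp τ σ (g ℓ)
  · have hDconst : D ((d : RatFunc K)⁻¹ * ∑ σ, act σ g₀)
        = (d : RatFunc K)⁻¹ * D (∑ σ, act σ g₀) := by
      have h0 : D ((d : RatFunc K)⁻¹) = 0 := by
        rw [Derivation.leibniz_inv, Derivation.map_natCast]; simp
      rw [Derivation.leibniz, h0]; simp [smul_eq_mul]
    have hCd : ∀ ℓ, RatFunc.C (algebraMap E K (γ ℓ) / (d : K))
        = (d : RatFunc K)⁻¹ * RatFunc.C (algebraMap E K (γ ℓ)) := by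
      intro ℓ; rw [map_div₀, map_natCast]; ring
    rw [hDconst]
    simp_rw [hCd, mul_assoc]
    rw [← Finset.mul_sum, ← mul_add, ← hsum, inv_mul_cancel_left₀ hdR]
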